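/- Let E, Q, J, R be real n×n matrices with EᵀQ = QᵀE, Jᵀ = −J, R = Rᵀ positive semidefinite, and Q symmetric positive definite; let B be a real n×m matrix and u : ℝ → ℝᵐ continuous. Let ε > 0, set E_ε = E + εI, and let x_ε : ℝ → ℝⁿ be continuously differentiable with E_ε x_ε'(t) = (J − R) Q x_ε(t) + B u(t) for all t. Set H(ξ) = ½ ξᵀ Qᵀ E ξ and y_ε(t) = Bᵀ Q x_ε(t). Then for all t₀ ∈ ℝ and h ≥ 0: H(x_ε(t₀ + h)) − H(x_ε(t₀)) ≤ ∫_{t₀}^{t₀+h} y_ε(s)ᵀ u(s) ds + (ε/2) | x_ε(t₀+h)ᵀ Q x_ε(t₀+h) − x_ε(t₀)ᵀ Q x_ε(t₀) |. -/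

import Mathlib

open Matrix

private lemma quadDeriv {n : ℕ} (M : Matrix (Fin n) (Fin n) ℝ)
    (x x' : ℝ → Fin n → ℝ) (t : ℝ) (hx : HasDerivAt x (x' t) t) :
    HasDerivAt (fun s => x s ⬝ᵥ M.mulVec (x s))
      (x' t ⬝ᵥ M.mulVec (x t) + x t ⬝ᵥ M.mulVec (x' t)) t := by
  have hxi : ∀ i, HasDerivAt (fun s => x s i) (x' t i) t := fun i =>
    hasDerivAt_pi.1 hx i
  have : HasDerivAt (fun s => ∑ i, x s i * ∑ j, M i j * x s j)
      (∑ i, (x' t i * ∑ j, M i j * x t j + x t i * ∑ j, M i j * x' t j)) t := by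
    apply HasDerivAt.fun_sum
    intro i _
    exact (hxi i).mul (HasDerivAt.fun_sum fun j _ => (hxi j).const_mul (M i j))
  simp only [dotProduct, mulVec, Finset.sum_add_distrib] at this ⊢
  exact this

/-- Approximate dissipativity for the ε-regularized port-Hamiltonian system
`E_ε x_ε' = (J - R) Q x_ε + B u` with `E_ε = E + εI`:  the original Hamiltonian
`H(ξ) = ½ ξᵀ Qᵀ E ξ` along the perturbed solution satisfies
`H(x_ε(t₀+h)) - H(x_ε(t₀)) ≤ ∫ y_εᵀ u + (ε/2)|x_ε(t₀+h)ᵀ Q x_ε(t₀+h) - x_ε(t₀)ᵀ Q x_ε(t₀)|`. -/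
theorem phs_eps_regularized_dissipativity {n m : ℕ}
    (E Q J R : Matrix (Fin n) (Fin n) ℝ) (B : Matrix (Fin n) (Fin m) ℝ)
    (hEQ : Eᵀ * Q = Qᵀ * E) (hJ : Jᵀ = -J) (hRsym : Rᵀ = R)
    (hRpsd : ∀ v : Fin n → ℝ, 0 ≤ v ⬝ᵥ R.mulVec v)
    (hQsym : Qᵀ = Q) (hQpd : ∀ v : Fin n → ℝ, v ≠ 0 → 0 < v ⬝ᵥ Q.mulVec v)
    (u : ℝ → Fin m → ℝ) (hu : Continuous u)
    (ε : ℝ) (hε : 0 < ε)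
    (Eε : Matrix (Fin n) (Fin n) ℝ) (hEε : Eε = E + ε • (1 : Matrix (Fin n) (Fin n) ℝ))
    (xε xε' : ℝ → Fin n → ℝ)
    (hx : ∀ t : ℝ, HasDerivAt xε (xε' t) t) (hx' : Continuous xε')
    (hsys : ∀ t : ℝ, Eε.mulVec (xε' t) = (J - R).mulVec (Q.mulVec (xε t)) + B.mulVec (u t))
    (H : (Fin n → ℝ) → ℝ)
    (hH : H = fun ξ => (1 / 2 : ℝ) * (ξ ⬝ᵥ (Qᵀ * E).mulVec ξ))
    (yε : ℝ → Fin m → ℝ)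
    (hy : yε = fun t => Bᵀ.mulVec (Q.mulVec (xε t))) :
    ∀ t₀ h : ℝ, 0 ≤ h →
      H (xε (t₀ + h)) - H (xε t₀) ≤
        (∫ s in t₀..(t₀ + h), yε s ⬝ᵥ u s) +
          (ε / 2) * |xε (t₀ + h) ⬝ᵥ Q.mulVec (xε (t₀ + h)) - xε t₀ ⬝ᵥ Q.mulVec (xε t₀)| := by
  intro t₀ h hh
  have hxc : Continuous xε := by
    rw [continuous_iff_continuousAt]; exact fun t => (hx t).continuousAt
  -- M = Qᵀ * Eε is symmetric
  set M : Matrix (Fin n) (Fin n) ℝ := Qᵀ * Eε with hM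
  have hMsym : Mᵀ = M := by
    have hQE : (Qᵀ * E)ᵀ = Qᵀ * E := by
      rw [Matrix.transpose_mul, Matrix.transpose_transpose, hEQ]
    have hM' : M = Qᵀ * E + ε • Q := by
      rw [hM, hEε, Matrix.mul_add, Matrix.mul_smul, Matrix.mul_one, hQsym]
    rw [hM', Matrix.transpose_add, hQE, Matrix.transpose_smul, hQsym]
  -- f = Hε along solution
  set f : ℝ → ℝ := fun s => (1 / 2 : ℝ) * (xε s ⬝ᵥ M.mulVec (xε s)) with hf
  set g : ℝ → ℝ := fun s => yε s ⬝ᵥ u s -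
      Q.mulVec (xε s) ⬝ᵥ R.mulVec (Q.mulVec (xε s)) with hg
  have hderiv : ∀ t, HasDerivAt f (g t) t := by
    intro t
    have h1 := quadDeriv M xε xε' t (hx t)
    have h2 : xε' t ⬝ᵥ M.mulVec (xε t) = xε t ⬝ᵥ M.mulVec (xε' t) := by
      rw [Matrix.dotProduct_mulVec, ← Matrix.mulVec_transpose, hMsym,
        dotProduct_comm]
    have h3 : xε t ⬝ᵥ M.mulVec (xε' t) = g t := by
      rw [hM, ← Matrix.mulVec_mulVec, Matrix.dotProduct_mulVec (xε t),
        ← Matrix.mulVec_transpose, Matrix.transpose_transpose, hsys t, hg, hy]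
      simp only [Matrix.mulVec_add, dotProduct_add, Matrix.sub_mulVec,
        dotProduct_sub]
      have hJ0 : Q.mulVec (xε t) ⬝ᵥ J.mulVec (Q.mulVec (xε t)) = 0 := by
        have h4 := Matrix.dotProduct_mulVec (Q.mulVec (xε t)) J (Q.mulVec (xε t))
        rw [← Matrix.mulVec_transpose, hJ, Matrix.neg_mulVec,
          neg_dotProduct] at h4
        have h5 : (J.mulVec (Q.mulVec (xε t))) ⬝ᵥ (Q.mulVec (xε t))
            = Q.mulVec (xε t) ⬝ᵥ J.mulVec (Q.mulVec (xε t)) :=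
          dotProduct_comm _ _
        linarith
      have hBu : Q.mulVec (xε t) ⬝ᵥ B.mulVec (u t)
          = Bᵀ.mulVec (Q.mulVec (xε t)) ⬝ᵥ u t := by
        rw [Matrix.dotProduct_mulVec, Matrix.mulVec_transpose]
      rw [hJ0, hBu]; ring
    have := (h1.const_mul (1/2 : ℝ))
    rw [h2, ← two_mul, ← mul_assoc] at this
    norm_num at this
    rw [h3] at this
    exact this
  have hgc : Continuous g := by
    rw [hg, hy]
    apply Continuous.sub
    · exact ((continuous_const.matrix_mulVec
        ((continuous_const.matrix_mulVec hxc))).dotProduct hu)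
    · exact ((continuous_const.matrix_mulVec hxc).dotProduct
        (continuous_const.matrix_mulVec (continuous_const.matrix_mulVec hxc)))
  have hle : t₀ ≤ t₀ + h := by linarith
  have hftc : ∫ s in t₀..(t₀ + h), g s = f (t₀ + h) - f t₀ :=
    intervalIntegral.integral_eq_sub_of_hasDerivAt
      (fun s _ => hderiv s) (hgc.intervalIntegrable _ _)
  have hmono : (∫ s in t₀..(t₀ + h), g s) ≤ ∫ s in t₀..(t₀ + h), yε s ⬝ᵥ u s := by
    apply intervalIntegral.integral_mono_on hle
      (hgc.intervalIntegrable _ _)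
      (((hy ▸ (continuous_const.matrix_mulVec
        (continuous_const.matrix_mulVec hxc)) : Continuous yε).dotProduct
        hu).intervalIntegrable _ _)
    intro s _
    have h0 := hRpsd (Q.mulVec (xε s))
    show yε s ⬝ᵥ u s - Q.mulVec (xε s) ⬝ᵥ R.mulVec (Q.mulVec (xε s)) ≤ yε s ⬝ᵥ u s
    linarith
  -- relate H and f
  have hHf : ∀ s : ℝ, H (xε s) = f s - (ε / 2) * (xε s ⬝ᵥ Q.mulVec (xε s)) := by
    intro s
    have h1 : Qᵀ * (ε • (1 : Matrix (Fin n) (Fin n) ℝ)) = ε • Q := by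
      rw [Matrix.mul_smul, Matrix.mul_one, hQsym]
    simp only [hH, hf, hM, hEε, Matrix.mul_add, h1, Matrix.add_mulVec,
      dotProduct_add, Matrix.smul_mulVec, dotProduct_smul,
      smul_eq_mul]
    ring
  have habs : -(xε (t₀ + h) ⬝ᵥ Q.mulVec (xε (t₀ + h)) - xε t₀ ⬝ᵥ Q.mulVec (xε t₀))
      ≤ |xε (t₀ + h) ⬝ᵥ Q.mulVec (xε (t₀ + h)) - xε t₀ ⬝ᵥ Q.mulVec (xε t₀)| :=
    neg_le_abs _
  have hε2 : 0 ≤ ε / 2 := by linarith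
  rw [hHf, hHf]
  have key : f (t₀ + h) - f t₀ ≤ ∫ s in t₀..(t₀ + h), yε s ⬝ᵥ u s := by
    rw [← hftc]; exact hmono
  nlinarith [mul_le_mul_of_nonneg_left habs hε2]
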